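/- Let M be a matroid on a finite ground set E, let C be a cocircuit of M, and let v ∈ C. Let T be any set of cocircuits of M satisfying {C' : C' a cocircuit of M with v ∉ C'} ⊆ T ⊆ {cocircuits of M} \ {C}. Then the ideal generated by {x_{C'} : C' ∈ T} satisfies (x_{C'} : C' ∈ T) : x_C = J(M ⧸ {v}) : x_C. -/

import Mathlib

open Matroid MvPolynomial

/-- The squarefree monomial `x_S = ∏_{i ∈ S} x_i`. -/
noncomputable def xS {α : Type*} [Fintype α] (K : Type*) [Field K] (S : Set α) :
    MvPolynomial α K :=
  ∏ i ∈ S.toFinite.toFinset, MvPolynomial.X i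

/-- The monomial `x^γ = ∏ i, x_i ^ γ(i)`. -/
noncomputable def xPow {α : Type*} [Fintype α] (K : Type*) [Field K] (γ : α → ℕ) :
    MvPolynomial α K :=
  ∏ i : α, (MvPolynomial.X i : MvPolynomial α K) ^ γ i

/-- `p_S`: the ideal of `K[x_i : i ∈ α]` generated by the variables `x_i`, `i ∈ S`. -/
noncomputable def pS {α : Type*} (K : Type*) [Field K] (S : Set α) :
    Ideal (MvPolynomial α K) :=
  Ideal.span (MvPolynomial.X '' S)

/-- The cover ideal `J(M) = ⋂_{F basis of M} p_F` of a matroid `M`. -/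
noncomputable def coverIdeal {α : Type*} [Fintype α] (K : Type*) [Field K] (M : Matroid α) :
    Ideal (MvPolynomial α K) :=
  ⨅ F ∈ {F : Set α | M.IsBase F}, pS K F

/-- The `ℓ`-th symbolic power `J(M)^{(ℓ)} = ⋂_{F basis of M} p_F^ℓ` of the cover ideal. -/
noncomputable def symbPow {α : Type*} [Fintype α] (K : Type*) [Field K] (M : Matroid α)
    (ℓ : ℕ) : Ideal (MvPolynomial α K) :=
  ⨅ F ∈ {F : Set α | M.IsBase F}, (pS K F) ^ ℓ

/-- `SF_ℓ(J(M))`: the ideal generated by the squarefree monomials of `J(M)^{(ℓ)}`, i.e. by the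
monomials `x_S` with `|S ∩ F| ≥ ℓ` for every basis `F` of `M`. -/
noncomputable def SF {α : Type*} [Fintype α] (K : Type*) [Field K] (M : Matroid α)
    (ℓ : ℕ) : Ideal (MvPolynomial α K) :=
  Ideal.span {m : MvPolynomial α K |
    ∃ S : Set α, m = xS K S ∧ ∀ F : Set α, M.IsBase F → ℓ ≤ (S ∩ F).ncard}

/-- Matroid deletion: `M ⧹ D` is the restriction of `M` to `M.E \ D`. -/
def mdel {α : Type*} (M : Matroid α) (D : Set α) : Matroid α := M ↾ (M.E \ D)

/-- Matroid contraction: `M ⧸ C = (M✶ ⧹ C)✶`. -/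
def mcon {α : Type*} (M : Matroid α) (C : Set α) : Matroid α := (mdel M✶ C)✶

/-- A cocircuit of `M`: a minimal subset of the ground set meeting every basis of `M`. -/
def IsCocircuit' {α : Type*} (M : Matroid α) (C : Set α) : Prop :=
  C ⊆ M.E ∧ (∀ F, M.IsBase F → (C ∩ F).Nonempty) ∧
    ∀ C' : Set α, C' ⊂ C → ∃ F, M.IsBase F ∧ C' ∩ F = ∅

section Aux

variable {α : Type*} [Fintype α] {K : Type*} [Field K]

open scoped Classical

/-- The exponent finsupp of the squarefree monomial `x_S`. -/
noncomputable def eSet (S : Set α) : α →₀ ℕ := ∑ i ∈ S.toFinite.toFinset, Finsupp.single i 1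

lemma eSet_apply (S : Set α) (j : α) : eSet S j = if j ∈ S then 1 else 0 := by
  classical
  rw [eSet, Finsupp.finset_sum_apply,
    Finset.sum_congr rfl (fun i _ => Finsupp.single_apply (a := i) (b := (1 : ℕ)) (a' := j)),
    Finset.sum_ite_eq' S.toFinite.toFinset j (fun _ => (1 : ℕ))]
  simp only [Set.Finite.mem_toFinset]

lemma eSet_le_iff {S : Set α} {d : α →₀ ℕ} : eSet S ≤ d ↔ ∀ i ∈ S, d i ≠ 0 := by
  rw [Finsupp.le_def]
  constructor
  · intro h i hi
    have := h i
    rw [eSet_apply, if_pos hi] at this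
    omega
  · intro h i
    rw [eSet_apply]
    split_ifs with hi
    · have := h i hi; omega
    · exact Nat.zero_le _

lemma xS_eq_monomial (S : Set α) : xS K S = monomial (eSet S) 1 := by
  classical
  rw [xS, eSet]
  generalize S.toFinite.toFinset = s
  induction s using Finset.induction with
  | empty => simp
  | @insert a s ha ih =>
    rw [Finset.prod_insert ha, Finset.sum_insert ha, ih,
      show (X a : MvPolynomial α K) = monomial (Finsupp.single a 1) 1 from rfl,
      monomial_mul, one_mul]

lemma mem_span_xS_of (𝒮 : Set (Set α)) (g : MvPolynomial α K)
    (h : ∀ d ∈ g.support, ∃ S ∈ 𝒮, eSet S ≤ d) :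
    g ∈ Ideal.span {m : MvPolynomial α K | ∃ S ∈ 𝒮, m = xS K S} := by
  have hg : g = ∑ d ∈ g.support, monomial d (coeff d g) := (support_sum_monomial_coeff g).symm
  rw [hg]
  refine Ideal.sum_mem _ fun d hd => ?_
  obtain ⟨S, hS, hle⟩ := h d hd
  have : (monomial d) (coeff d g) = monomial (d - eSet S) (coeff d g) * xS K S := by
    rw [xS_eq_monomial, monomial_mul, mul_one, tsub_add_cancel_of_le hle]
  rw [this]
  exact Ideal.mul_mem_left _ _ (Ideal.subset_span ⟨S, hS, rfl⟩)

lemma support_le_of_mem_span_xS {𝒮 : Set (Set α)} {g : MvPolynomial α K}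
    (hg : g ∈ Ideal.span {m : MvPolynomial α K | ∃ S ∈ 𝒮, m = xS K S}) :
    ∀ d ∈ g.support, ∃ S ∈ 𝒮, eSet S ≤ d := by
  classical
  refine Submodule.span_induction ?_ ?_ ?_ ?_ hg
  · rintro x ⟨S, hS, rfl⟩ d hd
    rw [xS_eq_monomial, support_monomial, if_neg one_ne_zero, Finset.mem_singleton] at hd
    exact ⟨S, hS, hd ▸ le_refl _⟩
  · simp
  · intro x y _ _ hx hy d hd
    rcases Finset.mem_union.1 (MvPolynomial.support_add hd) with h | h
    · exact hx d h
    · exact hy d h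
  · intro a x _ hx d hd
    have hsub := MvPolynomial.support_mul a x hd
    rw [Finset.mem_add] at hsub
    obtain ⟨d1, _, d2, hd2, rfl⟩ := hsub
    obtain ⟨S, hS, hle⟩ := hx d2 hd2
    exact ⟨S, hS, le_trans hle (Finsupp.le_def.2 fun i => Nat.le_add_left _ _)⟩

lemma mem_coverIdeal_iff {M' : Matroid α} {g : MvPolynomial α K} :
    g ∈ coverIdeal K M' ↔ ∀ F, M'.IsBase F → ∀ d ∈ g.support, ∃ i ∈ F, d i ≠ 0 := by
  rw [coverIdeal]
  simp only [Ideal.mem_iInf, Set.mem_setOf_eq, pS, mem_ideal_span_X_image]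

end Aux

section MatroidAux

variable {α : Type*} {M : Matroid α} {C : Set α} {v : α}

lemma cocircuit_dep (hC : IsCocircuit' M C) : M✶.Dep C :=
  dual_dep_iff_forall.2 ⟨hC.2.1, hC.1⟩

lemma cocircuit_ssubset_indep (hC : IsCocircuit' M C) {C' : Set α} (h : C' ⊂ C) :
    M✶.Indep C' := by
  obtain ⟨B, hB, hd⟩ := hC.2.2 C' h
  rw [dual_indep_iff_exists (h.subset.trans hC.1)]
  exact ⟨B, hB, Set.disjoint_iff_inter_eq_empty.2 hd⟩

lemma exists_base_mem (hC : IsCocircuit' M C) (hv : v ∈ C) : ∃ B, M.IsBase B ∧ v ∈ B := by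
  obtain ⟨B, hB, hd⟩ := hC.2.2 (C \ {v}) (Set.sdiff_singleton_ssubset.2 hv)
  obtain ⟨x, hxC, hxB⟩ := hC.2.1 B hB
  have hxv : x = v := by
    by_contra hne
    have : x ∈ (C \ {v}) ∩ B := ⟨⟨hxC, hne⟩, hxB⟩
    rw [hd] at this
    exact this
  exact ⟨B, hB, hxv ▸ hxB⟩

/-- Weak cocircuit elimination, in transversal form. -/
lemma elim_lemma [Fintype α] (hE : M.E = Set.univ) {C₁ C₂ : Set α}
    (h1 : IsCocircuit' M C₁) (h2 : IsCocircuit' M C₂) (hne : C₁ ≠ C₂) (hv1 : v ∈ C₁)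
    (hv2 : v ∈ C₂) {B : Set α} (hB : M.IsBase B) : (((C₁ ∪ C₂) \ {v}) ∩ B).Nonempty := by
  have hground : ∀ S : Set α, S ⊆ M✶.E := by
    intro S; rw [dual_ground, hE]; exact Set.subset_univ _
  suffices hdep : M✶.Dep ((C₁ ∪ C₂) \ {v}) by
    exact (dual_dep_iff_forall.1 hdep).1 B hB
  rw [← not_indep_iff (hground _)]
  intro hI0
  have hf : ∃ f, f ∈ C₂ ∧ f ∉ C₁ := by
    by_contra h
    push_neg at h
    rcases eq_or_ne C₂ C₁ with heq | hne'
    · exact hne heq.symm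
    · exact (cocircuit_dep h2).not_indep
        (cocircuit_ssubset_indep h1 (Set.ssubset_iff_subset_ne.2 ⟨h, hne'⟩))
  obtain ⟨f, hf2, hf1⟩ := hf
  have hI2 : M✶.Indep (C₂ \ {f}) :=
    cocircuit_ssubset_indep h2 (Set.sdiff_singleton_ssubset.2 hf2)
  obtain ⟨J, hJ, hI2J⟩ := hI2.subset_isBasis_of_subset
    (Set.diff_subset.trans Set.subset_union_right) (hground (C₁ ∪ C₂))
  have hfJ : f ∉ J := by
    intro hfJ
    have hsub : C₂ ⊆ J := by
      intro x hx
      by_cases hxf : x = f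
      · exact hxf ▸ hfJ
      · exact hI2J ⟨hx, hxf⟩
    exact (cocircuit_dep h2).not_indep (hJ.indep.subset hsub)
  have hg : ∃ g, g ∈ C₁ ∧ g ∉ J := by
    by_contra h
    push_neg at h
    exact (cocircuit_dep h1).not_indep (hJ.indep.subset h)
  obtain ⟨g, hg1, hgJ⟩ := hg
  have hgf : g ≠ f := fun h => hf1 (h ▸ hg1)
  obtain ⟨J', hJ', hI0J'⟩ := hI0.subset_isBasis_of_subset Set.diff_subset (hground (C₁ ∪ C₂))
  have hcardJJ' : J.ncard = J'.ncard := by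
    rw [Set.ncard_def, Set.ncard_def, hJ.encard_eq_encard hJ']
  have h1' : (insert f (insert g J)).ncard = J.ncard + 2 := by
    rw [Set.ncard_insert_of_notMem (by simp only [Set.mem_insert_iff, not_or]; exact ⟨fun h => hgf h.symm, hfJ⟩) ((Set.toFinite J).insert g),
      Set.ncard_insert_of_notMem hgJ (Set.toFinite J)]
  have h2' : insert f (insert g J) ⊆ C₁ ∪ C₂ := by
    intro x hx
    rcases hx with rfl | hx
    · exact Or.inr hf2
    rcases hx with rfl | hx
    · exact Or.inl hg1
    · exact hJ.subset hx
  have h3' : J.ncard + 2 ≤ (C₁ ∪ C₂).ncard := h1' ▸ Set.ncard_le_ncard h2' (Set.toFinite _)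
  have h4' : (C₁ ∪ C₂).ncard = ((C₁ ∪ C₂) \ {v}).ncard + 1 := by
    have hvd : v ∉ (C₁ ∪ C₂) \ {v} := fun h => h.2 rfl
    have hins := Set.ncard_insert_of_notMem hvd (Set.toFinite _)
    rw [Set.insert_diff_singleton, Set.insert_eq_self.2 (Set.mem_union_left _ hv1)] at hins
    omega
  have h5' : ((C₁ ∪ C₂) \ {v}).ncard ≤ J'.ncard := Set.ncard_le_ncard hI0J' (Set.toFinite _)
  omega

lemma mcon_ground (M : Matroid α) (v : α) : (mcon M {v}).E = M.E \ {v} := rfl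

lemma mcon_base_iff (hE : M.E = Set.univ) (hvB : ∃ B, M.IsBase B ∧ v ∈ B) {F : Set α} :
    (mcon M {v}).IsBase F ↔ M.IsBase (insert v F) ∧ v ∉ F := by
  simp only [mcon, mdel]
  constructor
  · intro hF
    obtain ⟨hbase, hFX⟩ := (dual_isBase_iff' (M := M✶ ↾ (M✶.E \ {v}))).1 hF
    rw [restrict_ground_eq] at hbase hFX
    rw [isBase_restrict_iff', isBasis'_iff_isBasis Set.diff_subset] at hbase
    obtain ⟨B₀m, hB₀m, hvB₀⟩ := hvB
    have hB₀ : M✶.IsBase (M.E \ B₀m) := hB₀m.compl_isBase_dual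
    have hvnB₀ : v ∉ M.E \ B₀m := fun h => h.2 hvB₀
    have hbb : M✶.IsBase ((M✶.E \ {v}) \ F) := by
      by_contra hnb
      obtain ⟨e, he, hei⟩ := hbase.indep.exists_insert_of_not_isBase hnb hB₀
      have hev : e ≠ v := fun h => hvnB₀ (h ▸ he.1)
      have hsub : insert e ((M✶.E \ {v}) \ F) ⊆ M✶.E \ {v} := by
        refine Set.insert_subset ⟨?_, hev⟩ (Set.diff_subset)
        rw [dual_ground, hE]; trivial
      have heq := hbase.eq_of_subset_indep hei (Set.subset_insert _ _) hsub
      exact he.2 (heq ▸ Set.mem_insert e _)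
    have hMbase : M.IsBase (M.E \ ((M✶.E \ {v}) \ F)) := hbb.compl_isBase_of_dual
    have hset : M.E \ ((M✶.E \ {v}) \ F) = insert v F := by
      rw [dual_ground, hE]
      ext x
      simp only [Set.mem_diff, Set.mem_univ, true_and, Set.mem_singleton_iff,
        not_and, not_not, Set.mem_insert_iff]
      tauto
    rw [hset] at hMbase
    exact ⟨hMbase, fun h => (hFX h).2 rfl⟩
  · rintro ⟨hBF, hvF⟩
    have hdb : M✶.IsBase (M.E \ insert v F) := hBF.compl_isBase_dual
    have hset : M.E \ insert v F = (M✶.E \ {v}) \ F := by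
      rw [dual_ground]
      ext x
      simp only [Set.mem_diff, Set.mem_insert_iff, Set.mem_singleton_iff, not_or]
      tauto
    rw [hset] at hdb
    have hFX : F ⊆ M✶.E \ {v} := by
      rw [dual_ground, hE]
      intro x hx
      refine ⟨trivial, ?_⟩
      rw [Set.mem_singleton_iff]
      rintro rfl
      exact hvF hx
    have hbasis : M✶.IsBasis ((M✶.E \ {v}) \ F) (M✶.E \ {v}) := by
      rw [isBasis_iff Set.diff_subset]
      exact ⟨hdb.indep, Set.diff_subset,
        fun J hJ hIJ _ => hdb.eq_of_subset_indep hJ hIJ⟩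
    have hrb : (M✶ ↾ (M✶.E \ {v})).IsBase ((M✶.E \ {v}) \ F) := by
      rw [isBase_restrict_iff']
      exact (isBasis'_iff_isBasis Set.diff_subset).2 hbasis
    rw [dual_isBase_iff']
    rw [restrict_ground_eq]
    exact ⟨hrb, hFX⟩

lemma exists_mcon_base_subset (hE : M.E = Set.univ) (hvB : ∃ B, M.IsBase B ∧ v ∈ B)
    {B : Set α} (hB : M.IsBase B) : ∃ F, (mcon M {v}).IsBase F ∧ F ⊆ B := by
  obtain ⟨B₀, hB₀, hvB₀⟩ := hvB
  have hvI : M.Indep {v} := hB₀.indep.subset (Set.singleton_subset_iff.2 hvB₀)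
  obtain ⟨B', hB', hvB', hB'sub⟩ := hvI.exists_isBase_subset_union_isBase hB
  refine ⟨B' \ {v}, ?_, ?_⟩
  · rw [mcon_base_iff hE ⟨B₀, hB₀, hvB₀⟩]
    refine ⟨?_, by simp⟩
    rwa [Set.insert_diff_singleton, Set.insert_eq_self.2 (hvB' rfl)]
  · intro x hx
    rcases hB'sub hx.1 with h | h
    · exact absurd h hx.2
    · exact h

end MatroidAux

/-- let `C` be a cocircuit of `M`, `v ∈ C`, and `T` any set of cocircuits of `M`
with `{C' cocircuit : v ∉ C'} ⊆ T ⊆ {cocircuits} \ {C}`. Then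
`(x_{C'} : C' ∈ T) : x_C = J(M ⧸ {v}) : x_C`. -/
theorem stmt17 {α : Type*} [Fintype α] (K : Type*) [Field K]
    (M : Matroid α) (hE : M.E = Set.univ)
    (C : Set α) (hC : IsCocircuit' M C) (v : α) (hv : v ∈ C)
    (T : Set (Set α))
    (hT1 : {C' : Set α | IsCocircuit' M C' ∧ v ∉ C'} ⊆ T)
    (hT2 : T ⊆ {C' : Set α | IsCocircuit' M C'} \ {C}) :
    Submodule.colon (Ideal.span {m : MvPolynomial α K | ∃ C' ∈ T, m = xS K C'})
        (Ideal.span {xS K C}) =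
      Submodule.colon (coverIdeal K (mcon M {v})) (Ideal.span {xS K C}) := by
  classical
  have hvB : ∃ B, M.IsBase B ∧ v ∈ B := exists_base_mem hC hv
  ext f
  rw [Ideal.mem_colon_span_singleton, Ideal.mem_colon_span_singleton, mem_coverIdeal_iff]
  constructor
  · intro hmem F hF d hd
    have hdC : eSet C ≤ d := by
      rw [xS_eq_monomial] at hd
      have hsub := MvPolynomial.support_mul f (monomial (eSet C) (1 : K)) hd
      rw [Finset.mem_add] at hsub
      obtain ⟨d1, _, d2, hd2, rfl⟩ := hsub
      rw [support_monomial, if_neg one_ne_zero, Finset.mem_singleton] at hd2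
      subst hd2
      exact Finsupp.le_def.2 fun i => Nat.le_add_left _ _
    have hd' : d ∈ (f * xS K C).support := hd
    obtain ⟨C', hC'T, hle⟩ := support_le_of_mem_span_xS hmem d hd'
    obtain ⟨hC'cc, hC'ne⟩ := hT2 hC'T
    obtain ⟨hBase, hvF⟩ := (mcon_base_iff hE hvB).1 hF
    by_cases hvC' : v ∈ C'
    · have hne : C ≠ C' := fun h => hC'ne (by simp [h.symm])
      obtain ⟨i, hiD, hiB⟩ := elim_lemma hE hC hC'cc hne hv hvC' hBase
      have hiF : i ∈ F := (Set.mem_insert_iff.1 hiB).resolve_left hiD.2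
      refine ⟨i, hiF, ?_⟩
      rcases hiD.1 with hiC | hiC'
      · exact eSet_le_iff.1 hdC i hiC
      · exact eSet_le_iff.1 hle i hiC'
    · obtain ⟨i, hiC', hiB⟩ := hC'cc.2.1 _ hBase
      have hiv : i ≠ v := fun h => hvC' (h ▸ hiC')
      have hiF : i ∈ F := (Set.mem_insert_iff.1 hiB).resolve_left hiv
      exact ⟨i, hiF, eSet_le_iff.1 hle i hiC'⟩
  · intro hmem
    apply mem_span_xS_of
    intro d hd
    set D : Set α := {i | d i ≠ 0 ∧ i ≠ v} with hD
    have hDmeets : ∀ F, (mcon M {v}).IsBase F → (D ∩ F).Nonempty := by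
      intro F hF
      obtain ⟨i, hiF, hdi⟩ := hmem F hF d hd
      have hiv : i ≠ v := by
        have hmem' := hF.subset_ground hiF
        rw [mcon_ground] at hmem'
        exact fun h => hmem'.2 (h ▸ rfl)
      exact ⟨i, ⟨hdi, hiv⟩, hiF⟩
    set 𝒜 : Set (Set α) := {S | S ⊆ D ∧ ∀ F, (mcon M {v}).IsBase F → (S ∩ F).Nonempty} with h𝒜
    obtain ⟨S, hS𝒜, hSmin⟩ :=
      Set.exists_min_image 𝒜 Set.ncard (Set.toFinite 𝒜) ⟨D, subset_rfl, hDmeets⟩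
    have hvS : v ∉ S := fun h => (hS𝒜.1 h).2 rfl
    have hScc : IsCocircuit' M S := by
      refine ⟨by rw [hE]; exact Set.subset_univ _, ?_, ?_⟩
      · intro B hB
        obtain ⟨F, hF, hFB⟩ := exists_mcon_base_subset hE hvB hB
        obtain ⟨i, hiS, hiF⟩ := hS𝒜.2 F hF
        exact ⟨i, hiS, hFB hiF⟩
      · intro S' hS'
        by_contra h
        push_neg at h
        have hS'meets : ∀ F, (mcon M {v}).IsBase F → (S' ∩ F).Nonempty := by
          intro F hF
          have hBF := ((mcon_base_iff hE hvB).1 hF).1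
          have hne := h _ hBF
          obtain ⟨i, hiS', hiB⟩ := hne
          have hiv : i ≠ v := fun he => ((hS𝒜.1 (hS'.subset hiS')).2) he
          exact ⟨i, hiS', (Set.mem_insert_iff.1 hiB).resolve_left hiv⟩
        have hS'𝒜 : S' ∈ 𝒜 := ⟨hS'.subset.trans hS𝒜.1, hS'meets⟩
        have hmin := hSmin S' hS'𝒜
        have hlt := Set.ncard_lt_ncard hS' (Set.toFinite S)
        omega
    exact ⟨S, hT1 ⟨hScc, hvS⟩, eSet_le_iff.2 fun i hi => (hS𝒜.1 hi).1⟩
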